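/- Let X be a g-tuple of compact self-adjoint operators on H with no nontrivial finite dimensional reducing subspaces, and suppose 0 is in the finite interior of K_X. Then the noncommutative convex hull K_X has no absolute extreme points. -/

import Mathlib

set_option maxHeartbeats 1000000
set_option synthInstance.maxHeartbeats 400000

instance piLpCompleteSpace {ι : Type*} [Fintype ι] (β : ι → Type*)
    [∀ i, UniformSpace (β i)] [∀ i, CompleteSpace (β i)] : CompleteSpace (PiLp 2 β) :=
  (PiLp.uniformEquiv 2 β).completeSpace_iff.2 (inferInstance : CompleteSpace (∀ i, β i))

/-- Finite amplification `I_m ⊗ X` acting on `E^m = PiLp 2 (fun _ : Fin m => E)`. -/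
noncomputable def amp {E : Type*} [NormedAddCommGroup E] [InnerProductSpace ℂ E]
    (m : ℕ) (X : E →L[ℂ] E) :
    PiLp 2 (fun _ : Fin m => E) →L[ℂ] PiLp 2 (fun _ : Fin m => E) :=
  ((PiLp.continuousLinearEquiv 2 ℂ (fun _ : Fin m => E)).symm.toContinuousLinearMap).comp
    ((ContinuousLinearMap.pi fun k => X.comp (ContinuousLinearMap.proj k)).comp
      (PiLp.continuousLinearEquiv 2 ℂ (fun _ : Fin m => E)).toContinuousLinearMap)

/-- Membership in the noncommutative convex hull `K_X`: the tuple `Y` (of operators on a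
Hilbert space `E`, e.g. `E = H_n`) has the form `V* (I_H ⊗ X) V` for an isometry
`V : E → H^∞`, where `H^∞ = ℓ²(ℕ, H)` and `I_H ⊗ X` is the operator acting
componentwise as `X i` on `H^∞`. -/
noncomputable def InKX {H : Type*} [NormedAddCommGroup H] [InnerProductSpace ℂ H]
    [CompleteSpace H] {g : ℕ} (X : Fin g → H →L[ℂ] H)
    {E : Type*} [NormedAddCommGroup E] [InnerProductSpace ℂ E] [CompleteSpace E]
    (Y : Fin g → E →L[ℂ] E) : Prop :=
  ∃ V : E →L[ℂ] lp (fun _ : ℕ => H) 2,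
    (∀ x, ‖V x‖ = ‖x‖) ∧
    ∀ i, ∃ XA : lp (fun _ : ℕ => H) 2 →L[ℂ] lp (fun _ : ℕ => H) 2,
      (∀ (v : lp (fun _ : ℕ => H) 2) (k : ℕ), XA v k = X i (v k)) ∧
      Y i = ((ContinuousLinearMap.adjoint V).comp (XA.comp V))

/-- `0` is in the finite interior of `K_X`: there are `d ∈ ℕ` and a unit vector
`v ∈ H^d` with `v* (I_d ⊗ X) v = 0 ∈ ℝ^g`. -/
noncomputable def ZeroFinInt {H : Type*} [NormedAddCommGroup H] [InnerProductSpace ℂ H]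
    {g : ℕ} (X : Fin g → H →L[ℂ] H) : Prop :=
  ∃ d : ℕ, 0 < d ∧ ∃ v : PiLp 2 (fun _ : Fin d => H), ‖v‖ = 1 ∧
    ∀ i, (inner ℂ (amp d (X i) v) v : ℂ) = 0

/-- Direct sum `A ⊕ B` of operators, acting on the Hilbert space direct sum
`E ⊕ F = WithLp 2 (E × F)`. -/
noncomputable def dsum {E F : Type*} [NormedAddCommGroup E] [InnerProductSpace ℂ E]
    [NormedAddCommGroup F] [InnerProductSpace ℂ F]
    (A : E →L[ℂ] E) (B : F →L[ℂ] F) : WithLp 2 (E × F) →L[ℂ] WithLp 2 (E × F) :=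
  ((WithLp.prodContinuousLinearEquiv 2 ℂ E F).symm.toContinuousLinearMap).comp
    ((A.prodMap B).comp (WithLp.prodContinuousLinearEquiv 2 ℂ E F).toContinuousLinearMap)

/-- Unitary equivalence of tuples of operators (over possibly distinct Hilbert spaces). -/
noncomputable def UEquiv {g : ℕ} {E F : Type*}
    [NormedAddCommGroup E] [InnerProductSpace ℂ E]
    [NormedAddCommGroup F] [InnerProductSpace ℂ F]
    (A : Fin g → E →L[ℂ] E) (B : Fin g → F →L[ℂ] F) : Prop :=
  ∃ U : E ≃ₗᵢ[ℂ] F, ∀ i x, B i (U x) = U (A i x)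

/-- `Y ∈ K_X(n)` is an absolute extreme point of `K_X`: whenever `Y = Σ V_ℓ* Z^ℓ V_ℓ`
is a weakly proper matrix convex combination of elements `Z^ℓ ∈ K_X(n_ℓ)`, then for each
`ℓ` either `n_ℓ = n` and `Z^ℓ` is unitarily equivalent to `Y`, or `n_ℓ > n` and there is
`A ∈ K_X` with `Z^ℓ` unitarily equivalent to `Y ⊕ A`. -/
noncomputable def IsAbsExt {H : Type*} [NormedAddCommGroup H] [InnerProductSpace ℂ H]
    [CompleteSpace H] {g : ℕ} (X : Fin g → H →L[ℂ] H) {n : ℕ}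
    (Y : Fin g → (EuclideanSpace ℂ (Fin n) →L[ℂ] EuclideanSpace ℂ (Fin n))) : Prop :=
  InKX X Y ∧
  ∀ (k : ℕ) (nn : Fin k → ℕ)
    (Z : ∀ ℓ : Fin k, Fin g →
      (EuclideanSpace ℂ (Fin (nn ℓ)) →L[ℂ] EuclideanSpace ℂ (Fin (nn ℓ))))
    (V : ∀ ℓ : Fin k, EuclideanSpace ℂ (Fin n) →L[ℂ] EuclideanSpace ℂ (Fin (nn ℓ))),
    (∀ ℓ, InKX X (Z ℓ)) → (∀ ℓ, V ℓ ≠ 0) →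
    (∑ ℓ, (ContinuousLinearMap.adjoint (V ℓ)).comp (V ℓ)) = 1 →
    (∀ i, Y i = ∑ ℓ, (ContinuousLinearMap.adjoint (V ℓ)).comp (((Z ℓ) i).comp (V ℓ))) →
    ∀ ℓ, (nn ℓ = n ∧ UEquiv Y (Z ℓ)) ∨
      (n < nn ℓ ∧ ∃ (m : ℕ) (A : Fin g →
          (EuclideanSpace ℂ (Fin m) →L[ℂ] EuclideanSpace ℂ (Fin m))),
        InKX X A ∧ UEquiv (fun i => dsum (Y i) (A i)) (Z ℓ))

open scoped InnerProductSpace ComplexConjugate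

lemma trace_onb {E : Type*} [NormedAddCommGroup E] [InnerProductSpace ℂ E]
    {ι : Type*} [Fintype ι] [DecidableEq ι] (b : OrthonormalBasis ι ℂ E) (f : E →ₗ[ℂ] E) :
    LinearMap.trace ℂ E f = ∑ i, ⟪b i, f (b i)⟫_ℂ := by
  rw [LinearMap.trace_eq_matrix_trace ℂ b.toBasis, Matrix.trace]
  congr 1
  ext i
  rw [Matrix.diag_apply, LinearMap.toMatrix_apply, b.coe_toBasis_repr_apply,
    b.repr_apply_apply, b.coe_toBasis]

lemma clm_isometry_inner {E F : Type*} [NormedAddCommGroup E] [InnerProductSpace ℂ E]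
    [NormedAddCommGroup F] [InnerProductSpace ℂ F]
    (V : E →L[ℂ] F) (hV : ∀ x, ‖V x‖ = ‖x‖) (x y : E) : ⟪V x, V y⟫_ℂ = ⟪x, y⟫_ℂ :=
  LinearIsometry.inner_map_map ⟨V.toLinearMap, hV⟩ x y

/-- Theorem 1.2 of the paper: if `X` is a tuple of compact self-adjoint
operators on a separable Hilbert space with no nontrivial finite dimensional reducing
subspaces and `0` is in the finite interior of `K_X`, then `K_X` has no absolute
extreme points. -/
theorem KX_no_absolute_extreme_points
    {H : Type*} [NormedAddCommGroup H] [InnerProductSpace ℂ H] [CompleteSpace H]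
    [TopologicalSpace.SeparableSpace H]
    {g : ℕ} (X : Fin g → H →L[ℂ] H)
    (hXc : ∀ i, IsCompactOperator (X i)) (hXsa : ∀ i, IsSelfAdjoint (X i))
    (hred : ∀ Wsub : Submodule ℂ H, IsClosed (Wsub : Set H) →
      (∀ i, ∀ v ∈ Wsub, X i v ∈ Wsub) → Wsub ≠ ⊥ → ¬ FiniteDimensional ℂ Wsub)
    (h0 : ZeroFinInt X) :
    ∀ (n : ℕ), 0 < n →
      ∀ Y : Fin g → (EuclideanSpace ℂ (Fin n) →L[ℂ] EuclideanSpace ℂ (Fin n)),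
        ¬ IsAbsExt X Y := by
  intro n hn Y hY
  classical
  obtain ⟨⟨V, hViso, hXA⟩, habs⟩ := hY
  choose XA hXAc hXAe using hXA
  have hVinner := clm_isometry_inner V hViso
  set M : Submodule ℂ (lp (fun _ : ℕ => H) 2) :=
    LinearMap.range (V : EuclideanSpace ℂ (Fin n) →ₗ[ℂ] lp (fun _ : ℕ => H) 2) with hM
  have hVmem : ∀ x, V x ∈ M := fun x => ⟨x, rfl⟩
  by_cases hinvar : ∀ i x, XA i (V x) ∈ M
  · -- Case A : the range of V is invariant; contradiction with hred
    set x₀ : EuclideanSpace ℂ (Fin n) := EuclideanSpace.single ⟨0, hn⟩ 1 with hx₀def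
    have hx₀ : ‖x₀‖ = 1 := by simp [hx₀def, EuclideanSpace.norm_single]
    have hVx₀ : V x₀ ≠ 0 := by
      intro h
      have h2 := hViso x₀
      rw [h, hx₀] at h2
      simp at h2
    obtain ⟨k0, hk0⟩ : ∃ k, (V x₀ : ∀ _ : ℕ, H) k ≠ 0 := by
      by_contra hcon
      push_neg at hcon
      exact hVx₀ (lp.ext (funext hcon))
    set πk : lp (fun _ : ℕ => H) 2 →ₗ[ℂ] H :=
      { toFun := fun v => v k0
        map_add' := fun a b => by
          show (↑(a + b) : ∀ _ : ℕ, H) k0 = _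
          rw [lp.coeFn_add]; rfl
        map_smul' := fun c a => by
          show (↑(c • a) : ∀ _ : ℕ, H) k0 = _
          rw [lp.coeFn_smul]; rfl } with hπk
    refine hred (M.map πk) (Submodule.closed_of_finiteDimensional _) ?_ ?_ inferInstance
    · rintro i v ⟨m, hm, rfl⟩
      obtain ⟨y, rfl⟩ := hm
      refine ⟨XA i (V y), hinvar i y, ?_⟩
      exact (hXAc i (V y) k0)
    · intro hbot
      apply hk0
      have hmem : (V x₀ : ∀ _ : ℕ, H) k0 ∈ M.map πk := ⟨V x₀, hVmem x₀, rfl⟩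
      rw [hbot] at hmem
      simpa using hmem
  · -- Case B
    push_neg at hinvar
    obtain ⟨i0, x0, hx0⟩ := hinvar
    haveI : CompleteSpace M := FiniteDimensional.complete ℂ M
    set r : lp (fun _ : ℕ => H) 2 := XA i0 (V x0) with hr
    set q : lp (fun _ : ℕ => H) 2 := r - (M.orthogonalProjection r : lp (fun _ : ℕ => H) 2)
      with hqdef
    have hqM : q ∈ Mᗮ := Submodule.sub_starProjection_mem_orthogonal r
    have hq0 : q ≠ 0 := by
      intro h
      apply hx0
      have h2 : r = (M.orthogonalProjection r : lp (fun _ : ℕ => H) 2) := by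
        rwa [sub_eq_zero] at h
      rw [h2]
      exact SetLike.coe_mem _
    have hqnorm : (0:ℝ) < ‖q‖ := norm_pos_iff.mpr hq0
    set w : lp (fun _ : ℕ => H) 2 := (‖q‖ : ℂ)⁻¹ • q with hwdef
    have hwnorm : ‖w‖ = 1 := by
      rw [hwdef, norm_smul]
      simp [hqnorm.ne']
    have hMw : ∀ z ∈ M, ⟪z, w⟫_ℂ = 0 := fun z hz => by
      rw [hwdef, inner_smul_right, hqM z hz, mul_zero]
    have hrw : ⟪r, w⟫_ℂ = (‖q‖ : ℂ) := by
      have h1 : ⟪(M.orthogonalProjection r : lp (fun _ : ℕ => H) 2), w⟫_ℂ = 0 :=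
        hMw _ (SetLike.coe_mem _)
      have h2 : r = (M.orthogonalProjection r : lp (fun _ : ℕ => H) 2) + q := by
        rw [hqdef]; abel
      have hne : (‖q‖ : ℂ) ≠ 0 := by exact_mod_cast hqnorm.ne'
      rw [h2, inner_add_left, h1, zero_add, hwdef, inner_smul_right,
        inner_self_eq_norm_sq_to_K]
      field_simp
      ring
      exact rfl
    clear_value w q r
    -- Case B: construct a nontrivial dilation of Y
    set ι : EuclideanSpace ℂ (Fin n) →L[ℂ] EuclideanSpace ℂ (Fin (n + 1)) :=
      LinearMap.toContinuousLinearMap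
        { toFun := fun x => WithLp.toLp 2 (Fin.snoc x 0 : Fin (n + 1) → ℂ)
          map_add' := fun a b => PiLp.ext fun j => by
            induction j using Fin.lastCases with
            | last => simp [PiLp.add_apply, Fin.snoc_last]
            | cast j => simp [PiLp.add_apply, Fin.snoc_castSucc]
          map_smul' := fun c a => PiLp.ext fun j => by
            induction j using Fin.lastCases with
            | last => simp [PiLp.smul_apply, Fin.snoc_last]
            | cast j => simp [PiLp.smul_apply, Fin.snoc_castSucc] } with hιdef
    have hιcs : ∀ (x : EuclideanSpace ℂ (Fin n)) (j : Fin n), ι x (Fin.castSucc j) = x j := by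
      intro x j
      show (Fin.snoc x 0 : Fin (n + 1) → ℂ) (Fin.castSucc j) = x j
      simp [Fin.snoc_castSucc]
    have hιlast : ∀ (x : EuclideanSpace ℂ (Fin n)), ι x (Fin.last n) = 0 := by
      intro x
      show (Fin.snoc x 0 : Fin (n + 1) → ℂ) (Fin.last n) = 0
      simp [Fin.snoc_last]
    set trunc : EuclideanSpace ℂ (Fin (n + 1)) →ₗ[ℂ] EuclideanSpace ℂ (Fin n) :=
      { toFun := fun x => WithLp.toLp 2 (fun j => x (Fin.castSucc j) : Fin n → ℂ)
        map_add' := fun x y => rfl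
        map_smul' := fun c x => rfl } with htrunc
    set lastlin : EuclideanSpace ℂ (Fin (n + 1)) →ₗ[ℂ] ℂ :=
      { toFun := fun x => x (Fin.last n)
        map_add' := fun x y => rfl
        map_smul' := fun c x => rfl } with hlastlin
    set W' : EuclideanSpace ℂ (Fin (n + 1)) →L[ℂ] lp (fun _ : ℕ => H) 2 :=
      LinearMap.toContinuousLinearMap
        ((V : EuclideanSpace ℂ (Fin n) →ₗ[ℂ] lp (fun _ : ℕ => H) 2).comp trunc
          + lastlin.smulRight w) with hW'def
    have hW'apply : ∀ x : EuclideanSpace ℂ (Fin (n + 1)),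
        W' x = V (trunc x) + lastlin x • w := fun _ => rfl
    have htruncapp : ∀ (x : EuclideanSpace ℂ (Fin (n + 1))) (j : Fin n),
        trunc x j = x (Fin.castSucc j) := fun _ _ => rfl
    have hlastapp : ∀ (x : EuclideanSpace ℂ (Fin (n + 1))), lastlin x = x (Fin.last n) :=
      fun _ => rfl
    have htruncι : ∀ (x : EuclideanSpace ℂ (Fin n)), trunc (ι x) = x := by
      intro x
      ext j
      rw [htruncapp]
      exact hιcs x j
    have hW'ι : ∀ x, W' (ι x) = V x := by
      intro x
      rw [hW'apply, hlastapp, hιlast, zero_smul, add_zero, htruncι]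
    have hwV : ∀ z : EuclideanSpace ℂ (Fin n), ⟪V z, w⟫_ℂ = 0 := fun z => hMw _ (hVmem z)
    have hVw : ∀ z, ⟪w, V z⟫_ℂ = 0 := fun z => by
      rw [← inner_conj_symm, hwV z, map_zero]
    have hww : ⟪w, w⟫_ℂ = 1 := by
      rw [inner_self_eq_norm_sq_to_K, hwnorm]
      norm_num
    have hιinner : ∀ x y, ⟪ι x, ι y⟫_ℂ = ⟪x, y⟫_ℂ := by
      intro x y
      rw [PiLp.inner_apply, PiLp.inner_apply, Fin.sum_univ_castSucc]
      simp [hιcs, hιlast]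
    have hW'inner : ∀ x y, ⟪W' x, W' y⟫_ℂ = ⟪x, y⟫_ℂ := by
      intro x y
      have hr2 : ⟪x, y⟫_ℂ = ⟪trunc x, trunc y⟫_ℂ + ⟪x (Fin.last n), y (Fin.last n)⟫_ℂ := by
        rw [PiLp.inner_apply, PiLp.inner_apply (𝕜 := ℂ) (trunc x) (trunc y),
          Fin.sum_univ_castSucc]
        rfl
      rw [hW'apply, hW'apply, hr2]
      simp only [inner_add_left, inner_add_right, inner_smul_left, inner_smul_right,
        hVinner, hwV, hVw, hww, hlastapp, RCLike.inner_apply]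
      ring
    have hW'iso : ∀ x, ‖W' x‖ = ‖x‖ := by
      intro x
      rw [norm_eq_sqrt_re_inner (𝕜 := ℂ), norm_eq_sqrt_re_inner (𝕜 := ℂ), hW'inner]
    have hιiso_adj : (ContinuousLinearMap.adjoint ι).comp ι = 1 :=
      (ContinuousLinearMap.inner_map_map_iff_adjoint_comp_self ι).mp hιinner
    have hι0 : ι ≠ 0 := by
      intro h
      have h2 := hιcs (EuclideanSpace.single ⟨0, hn⟩ 1) ⟨0, hn⟩
      rw [h] at h2
      simp [EuclideanSpace.single_apply] at h2
    set Z : Fin g → EuclideanSpace ℂ (Fin (n + 1)) →L[ℂ] EuclideanSpace ℂ (Fin (n + 1)) :=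
      fun i => (ContinuousLinearMap.adjoint W').comp ((XA i).comp W') with hZdef
    have hZin : InKX X Z := ⟨W', hW'iso, fun i => ⟨XA i, hXAc i, rfl⟩⟩
    have hWι : W'.comp ι = V := ContinuousLinearMap.ext hW'ι
    have hkey : ∀ i, Y i = (ContinuousLinearMap.adjoint ι).comp ((Z i).comp ι) := by
      intro i
      rw [hXAe i, ← hWι, ContinuousLinearMap.adjoint_comp]
      rfl
    have happ := habs 1 (fun _ => n + 1) (fun _ => Z) (fun _ => ι) (fun _ => hZin)
      (fun _ => hι0) (by rw [Fin.sum_univ_one]; exact hιiso_adj)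
      (fun i => by rw [Fin.sum_univ_one]; exact hkey i) 0
    rcases happ with ⟨hfalse, -⟩ | ⟨-, m, A, -, hUE⟩
    · omega
    obtain ⟨U, hU⟩ := hUE
    have hm : m = 1 := by
      have h1 := U.toLinearEquiv.finrank_eq
      have h2 := (WithLp.linearEquiv 2 ℂ
        (EuclideanSpace ℂ (Fin n) × EuclideanSpace ℂ (Fin m))).finrank_eq
      rw [Module.finrank_prod, finrank_euclideanSpace_fin, finrank_euclideanSpace_fin] at h2
      rw [h2, finrank_euclideanSpace_fin] at h1
      omega
    subst hm
    -- orthonormal bases and coordinates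
    set b1 := EuclideanSpace.basisFun (Fin (n + 1)) ℂ with hb1
    set b0 := EuclideanSpace.basisFun (Fin n) ℂ with hb0
    have hcoord1 : ∀ (v : EuclideanSpace ℂ (Fin (n + 1))) j, ⟪b1 j, v⟫_ℂ = v j := by
      intro v j
      rw [← OrthonormalBasis.repr_apply_apply]
      rfl
    have hcoord0 : ∀ (v : EuclideanSpace ℂ (Fin n)) j, ⟪b0 j, v⟫_ℂ = v j := by
      intro v j
      rw [← OrthonormalBasis.repr_apply_apply]
      rfl
    have hb1cs : ∀ j : Fin n, b1 (Fin.castSucc j) = ι (b0 j) := by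
      intro j
      ext l
      induction l using Fin.lastCases with
      | last =>
        rw [hιlast]
        simp [hb1, hb0, EuclideanSpace.basisFun_apply, EuclideanSpace.single_apply,
          (Fin.castSucc_lt_last j).ne']
      | cast l =>
        rw [hιcs]
        simp [hb1, hb0, EuclideanSpace.basisFun_apply, EuclideanSpace.single_apply,
          Fin.castSucc_inj]
    -- self-adjointness
    have hXAsym : ∀ i (u v : lp (fun _ : ℕ => H) 2), ⟪XA i u, v⟫_ℂ = ⟪u, XA i v⟫_ℂ := by
      intro i u v
      rw [lp.inner_eq_tsum, lp.inner_eq_tsum]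
      apply tsum_congr
      intro k
      rw [hXAc i u k, hXAc i v k]
      have hadj : ContinuousLinearMap.adjoint (X i) = X i := by
        rw [← ContinuousLinearMap.star_eq_adjoint]
        exact (hXsa i).star_eq
      conv_lhs => rw [← hadj]
      rw [ContinuousLinearMap.adjoint_inner_left]
    have hZsym : ∀ i (x y : EuclideanSpace ℂ (Fin (n + 1))), ⟪Z i x, y⟫_ℂ = ⟪x, Z i y⟫_ℂ := by
      intro i x y
      show ⟪(ContinuousLinearMap.adjoint W') ((XA i) (W' x)), y⟫_ℂ
          = ⟪x, (ContinuousLinearMap.adjoint W') ((XA i) (W' y))⟫_ℂ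
      rw [ContinuousLinearMap.adjoint_inner_left, ContinuousLinearMap.adjoint_inner_right]
      exact hXAsym i _ _
    have hYsym : ∀ i (x y : EuclideanSpace ℂ (Fin n)), ⟪Y i x, y⟫_ℂ = ⟪x, Y i y⟫_ℂ := by
      intro i x y
      rw [hXAe i]
      show ⟪(ContinuousLinearMap.adjoint V) ((XA i) (V x)), y⟫_ℂ
          = ⟪x, (ContinuousLinearMap.adjoint V) ((XA i) (V y))⟫_ℂ
      rw [ContinuousLinearMap.adjoint_inner_left, ContinuousLinearMap.adjoint_inner_right]
      exact hXAsym i _ _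
    -- entries
    set d : ℂ := ⟪b1 (Fin.last n), Z i0 (b1 (Fin.last n))⟫_ℂ with hd
    set zc : Fin n → ℂ := fun l => (Z i0 (b1 (Fin.last n))) (Fin.castSucc l) with hzc
    have hZcs : ∀ (x : EuclideanSpace ℂ (Fin n)) (l : Fin n),
        (Z i0 (ι x)) (Fin.castSucc l) = (Y i0 x) l := by
      intro x l
      have h4 : (Z i0 (ι x)) (Fin.castSucc l) = ⟪b1 (Fin.castSucc l), Z i0 (ι x)⟫_ℂ :=
        (hcoord1 _ _).symm
      rw [h4, hb1cs, ← ContinuousLinearMap.adjoint_inner_right]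
      have h5 : (ContinuousLinearMap.adjoint ι) (Z i0 (ι x)) = Y i0 x := by
        conv_rhs => rw [hkey i0]
        rfl
      rw [h5, hcoord0]
    have hrow : ∀ j : Fin n,
        (Z i0 (ι (b0 j))) (Fin.last n) = (starRingEnd ℂ) (zc j) := by
      intro j
      have h4 : (Z i0 (ι (b0 j))) (Fin.last n) = ⟪b1 (Fin.last n), Z i0 (ι (b0 j))⟫_ℂ :=
        (hcoord1 _ _).symm
      rw [h4, ← hZsym i0, ← inner_conj_symm, ← hb1cs, hcoord1]
    have hdd : (Z i0 (b1 (Fin.last n))) (Fin.last n) = d := by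
      rw [hd, hcoord1]
    -- quadratic sums
    have hZZsum : ∀ v : EuclideanSpace ℂ (Fin (n + 1)),
        ⟪v, Z i0 (Z i0 v)⟫_ℂ
          = ∑ l, (starRingEnd ℂ) ((Z i0 v) l) * ((Z i0 v) l) := by
      intro v
      rw [← hZsym i0, PiLp.inner_apply]
      exact Finset.sum_congr rfl fun _ _ => by rw [RCLike.inner_apply, mul_comm]
    have hYYsum : ∀ v : EuclideanSpace ℂ (Fin n),
        ⟪v, Y i0 (Y i0 v)⟫_ℂ
          = ∑ l, (starRingEnd ℂ) ((Y i0 v) l) * ((Y i0 v) l) := by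
      intro v
      rw [← hYsym i0, PiLp.inner_apply]
      exact Finset.sum_congr rfl fun _ _ => by rw [RCLike.inner_apply, mul_comm]
    -- first trace identity (block form)
    have htrZ : LinearMap.trace ℂ _
          ((Z i0 : EuclideanSpace ℂ (Fin (n + 1)) →ₗ[ℂ] EuclideanSpace ℂ (Fin (n + 1))))
        = LinearMap.trace ℂ _
          ((Y i0 : EuclideanSpace ℂ (Fin n) →ₗ[ℂ] EuclideanSpace ℂ (Fin n))) + d := by
      rw [trace_onb b1, trace_onb b0]
      simp only [ContinuousLinearMap.coe_coe]
      rw [Fin.sum_univ_castSucc]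
      congr 1
      · apply Finset.sum_congr rfl
        intro j _
        rw [hb1cs, ← ContinuousLinearMap.adjoint_inner_right]
        have h5 : (ContinuousLinearMap.adjoint ι) (Z i0 (ι (b0 j))) = Y i0 (b0 j) := by
          conv_rhs => rw [hkey i0]
          rfl
        rw [h5]
    -- second trace identity (block form)
    have htrZsq : LinearMap.trace ℂ _
          (((Z i0 : EuclideanSpace ℂ (Fin (n + 1)) →ₗ[ℂ] EuclideanSpace ℂ (Fin (n + 1))))
            ∘ₗ ((Z i0 : EuclideanSpace ℂ (Fin (n + 1)) →ₗ[ℂ] EuclideanSpace ℂ (Fin (n + 1)))))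
        = LinearMap.trace ℂ _
          (((Y i0 : EuclideanSpace ℂ (Fin n) →ₗ[ℂ] EuclideanSpace ℂ (Fin n)))
            ∘ₗ ((Y i0 : EuclideanSpace ℂ (Fin n) →ₗ[ℂ] EuclideanSpace ℂ (Fin n))))
          + ((∑ j, zc j * (starRingEnd ℂ) (zc j))
            + ((∑ l, (starRingEnd ℂ) (zc l) * zc l) + (starRingEnd ℂ) d * d)) := by
      rw [trace_onb b1, trace_onb b0]
      simp only [LinearMap.comp_apply, ContinuousLinearMap.coe_coe]
      rw [Fin.sum_univ_castSucc, ← add_assoc]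
      congr 1
      · rw [← Finset.sum_add_distrib]
        apply Finset.sum_congr rfl
        intro j _
        rw [hZZsum, hYYsum, hb1cs, Fin.sum_univ_castSucc, hrow]
        congr 1
        · apply Finset.sum_congr rfl
          intro l _
          rw [hZcs]
        · rw [Complex.conj_conj, mul_comm]
      · rw [hZZsum, Fin.sum_univ_castSucc, hdd]
    -- transfer traces through the unitary U
    set DD : WithLp 2 (EuclideanSpace ℂ (Fin n) × EuclideanSpace ℂ (Fin 1))
        →L[ℂ] WithLp 2 (EuclideanSpace ℂ (Fin n) × EuclideanSpace ℂ (Fin 1)) :=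
      dsum (Y i0) (A i0) with hDDdef
    have hZDx : ∀ x, Z i0 x = U (DD (U.symm x)) := by
      intro x
      conv_lhs => rw [← U.apply_symm_apply x]
      rw [hU i0]
    have hZZD : ∀ x, Z i0 (Z i0 x) = U (DD (DD (U.symm x))) := by
      intro x
      rw [hZDx x, hZDx (U (DD (U.symm x))), U.symm_apply_apply]
    have htr1 : LinearMap.trace ℂ _
          ((Z i0 : EuclideanSpace ℂ (Fin (n + 1)) →ₗ[ℂ] EuclideanSpace ℂ (Fin (n + 1))))
        = LinearMap.trace ℂ _
          ((DD : WithLp 2 (EuclideanSpace ℂ (Fin n) × EuclideanSpace ℂ (Fin 1)) →ₗ[ℂ]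
            WithLp 2 (EuclideanSpace ℂ (Fin n) × EuclideanSpace ℂ (Fin 1)))) := by
      rw [← LinearMap.trace_conj' _ U.toLinearEquiv]
      congr 1
      refine LinearMap.ext fun x => ?_
      rw [LinearEquiv.conj_apply_apply]
      simp only [LinearIsometryEquiv.coe_toLinearEquiv, ContinuousLinearMap.coe_coe]
      exact hZDx x
    have htr2 : LinearMap.trace ℂ _
          (((Z i0 : EuclideanSpace ℂ (Fin (n + 1)) →ₗ[ℂ] EuclideanSpace ℂ (Fin (n + 1))))
            ∘ₗ ((Z i0 : EuclideanSpace ℂ (Fin (n + 1)) →ₗ[ℂ] EuclideanSpace ℂ (Fin (n + 1)))))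
        = LinearMap.trace ℂ _
          (((DD : WithLp 2 (EuclideanSpace ℂ (Fin n) × EuclideanSpace ℂ (Fin 1)) →ₗ[ℂ]
            WithLp 2 (EuclideanSpace ℂ (Fin n) × EuclideanSpace ℂ (Fin 1))))
            ∘ₗ ((DD : WithLp 2 (EuclideanSpace ℂ (Fin n) × EuclideanSpace ℂ (Fin 1)) →ₗ[ℂ]
            WithLp 2 (EuclideanSpace ℂ (Fin n) × EuclideanSpace ℂ (Fin 1))))) := by
      rw [← LinearMap.trace_conj' _ U.toLinearEquiv]
      congr 1
      refine LinearMap.ext fun x => ?_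
      rw [LinearEquiv.conj_apply_apply]
      simp only [LinearIsometryEquiv.coe_toLinearEquiv, ContinuousLinearMap.coe_coe,
        LinearMap.comp_apply]
      exact hZZD x
    -- compute the traces of DD via the product map
    set P : (EuclideanSpace ℂ (Fin n) × EuclideanSpace ℂ (Fin 1)) →ₗ[ℂ]
        (EuclideanSpace ℂ (Fin n) × EuclideanSpace ℂ (Fin 1)) :=
      LinearMap.prodMap
        ((Y i0 : EuclideanSpace ℂ (Fin n) →ₗ[ℂ] EuclideanSpace ℂ (Fin n)))
        ((A i0 : EuclideanSpace ℂ (Fin 1) →ₗ[ℂ] EuclideanSpace ℂ (Fin 1))) with hPdef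
    set L := WithLp.prodContinuousLinearEquiv 2 ℂ (EuclideanSpace ℂ (Fin n))
      (EuclideanSpace ℂ (Fin 1)) with hLdef
    have hDDapply : ∀ x, DD x = L.symm (P (L x)) := fun _ => rfl
    have htrDD1 : LinearMap.trace ℂ _
          ((DD : WithLp 2 (EuclideanSpace ℂ (Fin n) × EuclideanSpace ℂ (Fin 1)) →ₗ[ℂ]
            WithLp 2 (EuclideanSpace ℂ (Fin n) × EuclideanSpace ℂ (Fin 1))))
        = LinearMap.trace ℂ _ P := by
      rw [← LinearMap.trace_conj' P L.toLinearEquiv.symm]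
      congr 1
    have hDDsq : ∀ x, DD (DD x) = L.symm (P (P (L x))) := by
      intro x
      rw [hDDapply, hDDapply, ContinuousLinearEquiv.apply_symm_apply]
    have htrDD2 : LinearMap.trace ℂ _
          (((DD : WithLp 2 (EuclideanSpace ℂ (Fin n) × EuclideanSpace ℂ (Fin 1)) →ₗ[ℂ]
            WithLp 2 (EuclideanSpace ℂ (Fin n) × EuclideanSpace ℂ (Fin 1))))
            ∘ₗ ((DD : WithLp 2 (EuclideanSpace ℂ (Fin n) × EuclideanSpace ℂ (Fin 1)) →ₗ[ℂ]
            WithLp 2 (EuclideanSpace ℂ (Fin n) × EuclideanSpace ℂ (Fin 1)))))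
        = LinearMap.trace ℂ _ (P ∘ₗ P) := by
      rw [← LinearMap.trace_conj' (P ∘ₗ P) L.toLinearEquiv.symm]
      congr 1
    -- the 1×1 corner
    set e1 : EuclideanSpace ℂ (Fin 1) := EuclideanSpace.single 0 1 with he1
    have hbF1 : (EuclideanSpace.basisFun (Fin 1) ℂ) 0 = e1 := by
      rw [EuclideanSpace.basisFun_apply]
    have hcoordF1 : ∀ v : EuclideanSpace ℂ (Fin 1), ⟪e1, v⟫_ℂ = v 0 := by
      intro v
      rw [← hbF1, ← OrthonormalBasis.repr_apply_apply]
      rfl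
    set a : ℂ := (A i0 e1) 0 with ha
    have hAe1 : A i0 e1 = a • e1 := by
      ext j
      have hj : j = 0 := Subsingleton.elim j 0
      subst hj
      rw [PiLp.smul_apply]
      have : e1 0 = 1 := by simp [he1, EuclideanSpace.single_apply]
      rw [this, smul_eq_mul, mul_one]
    have htrA : LinearMap.trace ℂ _
        ((A i0 : EuclideanSpace ℂ (Fin 1) →ₗ[ℂ] EuclideanSpace ℂ (Fin 1))) = a := by
      rw [trace_onb (EuclideanSpace.basisFun (Fin 1) ℂ), Fin.sum_univ_one]
      simp only [ContinuousLinearMap.coe_coe]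
      rw [hbF1, hcoordF1]
    have htrAA : LinearMap.trace ℂ _
        (((A i0 : EuclideanSpace ℂ (Fin 1) →ₗ[ℂ] EuclideanSpace ℂ (Fin 1)))
          ∘ₗ ((A i0 : EuclideanSpace ℂ (Fin 1) →ₗ[ℂ] EuclideanSpace ℂ (Fin 1)))) = a * a := by
      rw [trace_onb (EuclideanSpace.basisFun (Fin 1) ℂ), Fin.sum_univ_one]
      simp only [ContinuousLinearMap.coe_coe, LinearMap.comp_apply]
      rw [hbF1, hcoordF1, hAe1, map_smul, hAe1, PiLp.smul_apply, PiLp.smul_apply]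
      have : e1 0 = 1 := by simp [he1, EuclideanSpace.single_apply]
      rw [this, smul_eq_mul, smul_eq_mul, mul_one]
    have hPP : P ∘ₗ P = LinearMap.prodMap
        (((Y i0 : EuclideanSpace ℂ (Fin n) →ₗ[ℂ] EuclideanSpace ℂ (Fin n)))
          ∘ₗ ((Y i0 : EuclideanSpace ℂ (Fin n) →ₗ[ℂ] EuclideanSpace ℂ (Fin n))))
        (((A i0 : EuclideanSpace ℂ (Fin 1) →ₗ[ℂ] EuclideanSpace ℂ (Fin 1)))
          ∘ₗ ((A i0 : EuclideanSpace ℂ (Fin 1) →ₗ[ℂ] EuclideanSpace ℂ (Fin 1)))) := by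
      refine LinearMap.ext fun x => ?_
      simp [hPdef, LinearMap.prodMap_apply]
    -- conclude : d = a and the off-diagonal column vanishes
    have hda : d = a := by
      have e2' : LinearMap.trace ℂ _
            ((Y i0 : EuclideanSpace ℂ (Fin n) →ₗ[ℂ] EuclideanSpace ℂ (Fin n))) + d
          = LinearMap.trace ℂ _
            ((Y i0 : EuclideanSpace ℂ (Fin n) →ₗ[ℂ] EuclideanSpace ℂ (Fin n))) + a := by
        rw [← htrZ, htr1, htrDD1, hPdef, LinearMap.trace_prodMap', htrA]
      exact add_left_cancel e2'
    have hdreal : (starRingEnd ℂ) d = d := by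
      rw [hd, inner_conj_symm, hZsym i0]
    have hsq2 : LinearMap.trace ℂ _
          (((Y i0 : EuclideanSpace ℂ (Fin n) →ₗ[ℂ] EuclideanSpace ℂ (Fin n)))
            ∘ₗ ((Y i0 : EuclideanSpace ℂ (Fin n) →ₗ[ℂ] EuclideanSpace ℂ (Fin n))))
          + ((∑ j, zc j * (starRingEnd ℂ) (zc j))
            + ((∑ l, (starRingEnd ℂ) (zc l) * zc l) + (starRingEnd ℂ) d * d))
        = LinearMap.trace ℂ _
          (((Y i0 : EuclideanSpace ℂ (Fin n) →ₗ[ℂ] EuclideanSpace ℂ (Fin n)))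
            ∘ₗ ((Y i0 : EuclideanSpace ℂ (Fin n) →ₗ[ℂ] EuclideanSpace ℂ (Fin n))))
          + a * a := by
      rw [← htrZsq, htr2, htrDD2, hPP, LinearMap.trace_prodMap', htrAA]
    have hzero : (∑ j, zc j * (starRingEnd ℂ) (zc j))
        + (∑ l, (starRingEnd ℂ) (zc l) * zc l) = 0 := by
      have h8 := add_left_cancel hsq2
      have h9 : (starRingEnd ℂ) d * d = a * a := by rw [hdreal, hda]
      linear_combination h8 - h9
    have hnormSq : ((∑ j, Complex.normSq (zc j) : ℝ) : ℂ)
        + ((∑ j, Complex.normSq (zc j) : ℝ) : ℂ) = 0 := by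
      push_cast
      rw [show (∑ j, ((Complex.normSq (zc j) : ℝ) : ℂ))
          = ∑ j, zc j * (starRingEnd ℂ) (zc j) from
        Finset.sum_congr rfl fun j _ => (Complex.mul_conj _).symm]
      have h2 : ∑ j, (starRingEnd ℂ) (zc j) * zc j
          = ∑ j, zc j * (starRingEnd ℂ) (zc j) :=
        Finset.sum_congr rfl fun j _ => mul_comm _ _
      nth_rewrite 2 [← h2]
      exact hzero
    have hSr : ∑ j, Complex.normSq (zc j) = 0 := by
      have h10 : ((2 * ∑ j, Complex.normSq (zc j) : ℝ) : ℂ) = 0 := by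
        push_cast
        push_cast at hnormSq
        linear_combination hnormSq
      have h11 : (2 * ∑ j, Complex.normSq (zc j) : ℝ) = 0 := by exact_mod_cast h10
      linarith
    have hzc0 : ∀ l, zc l = 0 := by
      intro l
      have h12 := (Finset.sum_eq_zero_iff_of_nonneg
        (fun j _ => Complex.normSq_nonneg (zc j))).mp hSr l (Finset.mem_univ l)
      exact Complex.normSq_eq_zero.mp h12
    -- final contradiction
    have hfin1 : ⟪Z i0 (ι x0), b1 (Fin.last n)⟫_ℂ = 0 := by
      rw [hZsym i0, PiLp.inner_apply, Fin.sum_univ_castSucc]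
      have hz1 : ∀ l : Fin n,
          ⟪(ι x0) (Fin.castSucc l), (Z i0 (b1 (Fin.last n))) (Fin.castSucc l)⟫_ℂ = 0 := by
        intro l
        have : (Z i0 (b1 (Fin.last n))) (Fin.castSucc l) = zc l := rfl
        rw [RCLike.inner_apply, this, hzc0 l, zero_mul]
      rw [Finset.sum_eq_zero fun l _ => hz1 l, hιlast, zero_add]
      simp
    have hfin2 : ⟪Z i0 (ι x0), b1 (Fin.last n)⟫_ℂ = (‖q‖ : ℂ) := by
      show ⟪(ContinuousLinearMap.adjoint W') ((XA i0) (W' (ι x0))), b1 (Fin.last n)⟫_ℂ = _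
      rw [ContinuousLinearMap.adjoint_inner_left, hW'ι]
      have hW'b1 : W' (b1 (Fin.last n)) = w := by
        rw [hW'apply, hlastapp]
        have h6 : trunc (b1 (Fin.last n)) = 0 := by
          ext j
          rw [htruncapp]
          simp [hb1, EuclideanSpace.basisFun_apply, EuclideanSpace.single_apply,
            (Fin.castSucc_lt_last j).ne]
        have h7 : (b1 (Fin.last n)) (Fin.last n) = 1 := by
          simp [hb1, EuclideanSpace.basisFun_apply, EuclideanSpace.single_apply]
        rw [h6, h7, map_zero, zero_add, one_smul]
      rw [hW'b1, ← hr]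
      exact hrw
    rw [hfin1] at hfin2
    have h13 : ‖q‖ = 0 := by exact_mod_cast hfin2.symm
    exact hqnorm.ne' h13
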